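/- Let (X,d) be a metric space, m ≥ 1 a natural number, w > 0, r ∈ X, and x_1, …, x_m ∈ X pairwise distinct points with d(r, x_i) = w for all i and d(x_i, x_j) = 2w for all i ≠ j. Let N ∈ ℕ and p_0, p_1, …, p_N ∈ X be a sequence with p_0 = r such that every x_i appears among p_0, …, p_N, and for each i let t_i be the least index j with p_j = x_i. Then Σ_{i=1}^m ( Σ_{j=0}^{t_i − 1} d(p_j, p_{j+1}) ) ≥ m²·w. -/

import Mathlib

open Finset

-- path segment bound
lemma star_seg {X : Type*} [MetricSpace X] (p : ℕ → X) {a b : ℕ} (hab : a ≤ b) :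
    dist (p a) (p b) ≤ ∑ j ∈ Finset.Ico a b, dist (p j) (p (j + 1)) := by
  have h := dist_le_range_sum_dist (fun k => p (a + k)) (b - a)
  rw [Finset.sum_Ico_eq_sum_range]
  simp only [Nat.add_sub_cancel' hab] at h
  calc dist (p a) (p b) = dist (p (a + 0)) (p b) := by rw [Nat.add_zero]
    _ ≤ ∑ k ∈ Finset.range (b - a), dist (p (a + k)) (p (a + (k + 1))) := h
    _ = ∑ k ∈ Finset.range (b - a), dist (p (a + k)) (p (a + k + 1)) := by
        apply Finset.sum_congr rfl; intros; rw [Nat.add_assoc]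

lemma star_key {X : Type*} [MetricSpace X] {m : ℕ} {w : ℝ} (hw : 0 < w)
    (r : X) (x : Fin m → X) (hx : Function.Injective x)
    (hrx : ∀ i, dist r (x i) = w)
    (hxx : ∀ i j, i ≠ j → dist (x i) (x j) = 2 * w)
    (p : ℕ → X) (hp0 : p 0 = r)
    (t : Fin m → ℕ)
    (htp : ∀ i, p (t i) = x i) :
    ∀ (n : ℕ) (s : Finset (Fin m)), s.card = n → s.Nonempty → ∀ T, (∀ i ∈ s, t i ≤ T) →
      (2 * (s.card : ℝ) - 1) * w ≤ ∑ j ∈ Finset.range T, dist (p j) (p (j + 1)) := by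
  have htinj : Function.Injective t := by
    intro i j h
    apply hx
    rw [← htp, ← htp, h]
  intro n
  induction n using Nat.strong_induction_on with
  | _ n ih =>
    intro s hcard hs T hT
    obtain ⟨i₀, hi₀s, hmax⟩ := Finset.exists_max_image s t hs
    by_cases hne : (s.erase i₀).Nonempty
    · obtain ⟨i₁, hi₁s, hmax₁⟩ := Finset.exists_max_image _ t hne
      have hi₁ne : i₁ ≠ i₀ := Finset.ne_of_mem_erase hi₁s
      have hi₁s' : i₁ ∈ s := Finset.mem_of_mem_erase hi₁s
      have hlt : t i₁ < t i₀ :=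
        lt_of_le_of_ne (hmax i₁ hi₁s') (fun h => hi₁ne (htinj h))
      have hcard' : (s.erase i₀).card = n - 1 := by
        rw [Finset.card_erase_of_mem hi₀s, hcard]
      have hn1 : 1 ≤ n := by
        rw [← hcard]; exact Finset.card_pos.mpr hs
      have ihs := ih (n - 1) (by omega) (s.erase i₀) hcard' hne (t i₁) hmax₁
      have hd : dist (p (t i₁)) (p (t i₀)) = 2 * w := by
        rw [htp, htp]; exact hxx _ _ hi₁ne
      have hseg := star_seg p (le_of_lt hlt)
      have hsplit : ∑ j ∈ Finset.range (t i₀), dist (p j) (p (j + 1)) =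
          (∑ j ∈ Finset.range (t i₁), dist (p j) (p (j + 1))) +
          ∑ j ∈ Finset.Ico (t i₁) (t i₀), dist (p j) (p (j + 1)) := by
        rw [Finset.range_eq_Ico, Finset.range_eq_Ico]
        exact (Finset.sum_Ico_consecutive (fun j => dist (p j) (p (j + 1))) (Nat.zero_le _) (le_of_lt hlt)).symm
      have hmono : ∑ j ∈ Finset.range (t i₀), dist (p j) (p (j + 1)) ≤
          ∑ j ∈ Finset.range T, dist (p j) (p (j + 1)) := by
        apply Finset.sum_le_sum_of_subset_of_nonneg
        · exact Finset.range_subset_range.mpr (hT i₀ hi₀s)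
        · intros; exact dist_nonneg
      have hc2 : 2 ≤ n := by
        have := Finset.card_pos.mpr hne
        omega
      have hcast : ((s.erase i₀).card : ℝ) = (n : ℝ) - 1 := by
        rw [hcard']
        push_cast [Nat.cast_sub hn1]
        ring
      rw [hcard]
      rw [hcast] at ihs
      have h2w : 2 * w ≤ ∑ j ∈ Finset.Ico (t i₁) (t i₀), dist (p j) (p (j + 1)) := by
        rw [← hd]; exact hseg
      linarith
    · have hsing : s = {i₀} := by
        rw [Finset.eq_singleton_iff_unique_mem]
        refine ⟨hi₀s, fun j hj => ?_⟩
        by_contra h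
        have : j ∈ s.erase i₀ := Finset.mem_erase.mpr ⟨h, hj⟩
        rw [Finset.not_nonempty_iff_eq_empty.mp hne] at this
        exact Finset.notMem_empty j this
      have hcard1 : s.card = 1 := by rw [hsing]; simp
      have hw' : w ≤ ∑ j ∈ Finset.range T, dist (p j) (p (j + 1)) := by
        have h1 : dist (p 0) (p (t i₀)) = w := by rw [hp0, htp]; exact hrx i₀
        calc w = dist (p 0) (p (t i₀)) := h1.symm
          _ ≤ ∑ j ∈ Finset.Ico 0 (t i₀), dist (p j) (p (j + 1)) :=
            star_seg p (Nat.zero_le _)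
          _ = ∑ j ∈ Finset.range (t i₀), dist (p j) (p (j + 1)) := by
            rw [Finset.range_eq_Ico]
          _ ≤ _ := by
            apply Finset.sum_le_sum_of_subset_of_nonneg
            · exact Finset.range_subset_range.mpr (hT i₀ hi₀s)
            · intros; exact dist_nonneg
      rw [hcard1]
      push_cast
      linarith

theorem star_traversal_randomized_lower_bound
    {X : Type*} [MetricSpace X] (m : ℕ) (hm : 1 ≤ m) (w : ℝ) (hw : 0 < w)
    (r : X) (x : Fin m → X) (hx : Function.Injective x)
    (hrx : ∀ i : Fin m, dist r (x i) = w)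
    (hxx : ∀ i j : Fin m, i ≠ j → dist (x i) (x j) = 2 * w)
    (N : ℕ) (p : ℕ → X) (hp0 : p 0 = r)
    (t : Fin m → ℕ)
    (ht : ∀ i : Fin m, t i ≤ N ∧ p (t i) = x i ∧ ∀ j < t i, p j ≠ x i) :
    (m : ℝ) ^ 2 * w ≤ ∑ i, ∑ j ∈ Finset.range (t i), dist (p j) (p (j + 1)) := by
  have htp : ∀ i, p (t i) = x i := fun i => (ht i).2.1
  have key := star_key hw r x hx hrx hxx p hp0 t htp
  -- main induction: over finsets
  suffices h : ∀ (n : ℕ) (s : Finset (Fin m)), s.card = n →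
      ((s.card : ℝ)) ^ 2 * w ≤ ∑ i ∈ s, ∑ j ∈ Finset.range (t i), dist (p j) (p (j + 1)) by
    have := h Finset.univ.card Finset.univ rfl
    simpa using this
  intro n
  induction n using Nat.strong_induction_on with
  | _ n ih =>
    intro s hcard
    rcases s.eq_empty_or_nonempty with rfl | hs
    · simp at hcard
      subst hcard
      simp
    · obtain ⟨i₀, hi₀s, hmax⟩ := Finset.exists_max_image s t hs
      have hn1 : 1 ≤ n := by rw [← hcard]; exact Finset.card_pos.mpr hs
      have hcard' : (s.erase i₀).card = n - 1 := by
        rw [Finset.card_erase_of_mem hi₀s, hcard]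
      have ihs := ih (n - 1) (by omega) (s.erase i₀) hcard'
      have hkey := key n s hcard hs (t i₀) hmax
      have hsum : ∑ i ∈ s, ∑ j ∈ Finset.range (t i), dist (p j) (p (j + 1)) =
          (∑ i ∈ s.erase i₀, ∑ j ∈ Finset.range (t i), dist (p j) (p (j + 1))) +
          ∑ j ∈ Finset.range (t i₀), dist (p j) (p (j + 1)) := by
        rw [← Finset.sum_erase_add s _ hi₀s]
      have hcast : ((s.erase i₀).card : ℝ) = (n : ℝ) - 1 := by
        rw [hcard']
        push_cast [Nat.cast_sub hn1]
        ring
      rw [hcast] at ihs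
      rw [hcard] at hkey ⊢
      have hn1' : (1 : ℝ) ≤ (n : ℝ) := by exact_mod_cast hn1
      nlinarith [ihs, hkey]
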